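/- Let K be a simplicial complex on the vertex set [m] = {1,…,m} and let v ∈ [m]. If the Alexander dual K^∨ of K (taken over [m]) is shellable, then the Alexander dual of the deletion dl_K(v) := {σ ∈ K : v ∉ σ}, taken over [m] ∖ {v}, is shellable (where the void complex, having no facets, counts as shellable). -/

import Mathlib

open Finset

/-- A simplicial complex: a collection of subsets of the vertex set, closed under
taking subsets and containing the empty set. -/
def IsComplex {V : Type*} (K : Set (Finset V)) : Prop :=
  ∅ ∈ K ∧ ∀ σ ∈ K, ∀ τ ⊆ σ, τ ∈ K

/-- `F` is a facet (maximal face) of `K`. -/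
def IsFacet {V : Type*} (K : Set (Finset V)) (F : Finset V) : Prop :=
  F ∈ K ∧ ∀ G ∈ K, F ⊆ G → F = G

/-- `L` is a shelling of `K`: a duplicate-free enumeration of all facets of `K` such that
for each `k ≥ 2` (here `k ≥ 1` in 0-indexed form), the collection
`{σ ⊆ F_k : σ ⊆ F_j for some j < k}` is nonempty and each of its maximal elements has
cardinality `|F_k| - 1`. -/
def IsShelling {V : Type*} (K : Set (Finset V)) (L : List (Finset V)) : Prop :=
  L.Nodup ∧ (∀ F, F ∈ L ↔ IsFacet K F) ∧
    ∀ k : Fin L.length, 1 ≤ (k : ℕ) →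
      (∃ σ : Finset V, σ ⊆ L.get k ∧ ∃ j : Fin L.length, (j : ℕ) < (k : ℕ) ∧ σ ⊆ L.get j) ∧
      ∀ σ : Finset V,
        (σ ⊆ L.get k ∧ ∃ j : Fin L.length, (j : ℕ) < (k : ℕ) ∧ σ ⊆ L.get j) →
        (∀ ρ : Finset V,
          (ρ ⊆ L.get k ∧ ∃ j : Fin L.length, (j : ℕ) < (k : ℕ) ∧ ρ ⊆ L.get j) →
            σ ⊆ ρ → σ = ρ) →
        σ.card + 1 = (L.get k).card

/-- A (possibly void) simplicial complex is shellable if it admits a shelling. -/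
def Shellable {V : Type*} (K : Set (Finset V)) : Prop :=
  ∃ L, IsShelling K L

/-- The Alexander dual of a complex `L` with respect to a finite vertex set `S`:
`L^∨ = {σ ⊆ S : S ∖ σ ∉ L}`. -/
def dualOver {V : Type*} [DecidableEq V] (S : Finset V) (L : Set (Finset V)) :
    Set (Finset V) :=
  {σ | σ ⊆ S ∧ S \ σ ∉ L}

/-- Facets of the link of `v` are exactly erasures of facets containing `v`. -/
lemma facet_link_iff {V : Type*} [DecidableEq V] (D : Set (Finset V)) (v : V)
    (F : Finset V) :
    IsFacet {σ | v ∉ σ ∧ insert v σ ∈ D} F ↔ v ∉ F ∧ IsFacet D (insert v F) := by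
  constructor
  · rintro ⟨⟨hvF, hmem⟩, hmax⟩
    refine ⟨hvF, hmem, ?_⟩
    intro G hG hsub
    have hvG : v ∈ G := hsub (mem_insert_self v F)
    have h1 : G.erase v ∈ {σ | v ∉ σ ∧ insert v σ ∈ D} := by
      refine ⟨notMem_erase v G, ?_⟩
      rwa [Finset.insert_erase hvG]
    have h2 : F ⊆ G.erase v := by
      intro x hx
      refine Finset.mem_erase.2 ⟨?_, hsub (mem_insert_of_mem hx)⟩
      rintro rfl; exact hvF hx
    have h3 := hmax _ h1 h2
    rw [h3, Finset.insert_erase hvG]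
  · rintro ⟨hvF, hmem, hmax⟩
    refine ⟨⟨hvF, hmem⟩, ?_⟩
    rintro G ⟨hvG, hG⟩ hsub
    have h : insert v F = insert v G := hmax _ hG (Finset.insert_subset_insert _ hsub)
    have h2 := congrArg (fun s => Finset.erase s v) h
    simpa [Finset.erase_insert hvF, Finset.erase_insert hvG] using h2

/-- Links of shellable complexes are shellable. -/
lemma link_shellable {V : Type*} [DecidableEq V] (D : Set (Finset V)) (v : V)
    (hs : Shellable D) : Shellable {σ | v ∉ σ ∧ insert v σ ∈ D} := by
  classical
  obtain ⟨L, hnd, hfac, hstep⟩ := hs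
  set lk : Set (Finset V) := {σ | v ∉ σ ∧ insert v σ ∈ D} with hlk
  set idxs : List (Fin L.length) :=
    (List.finRange L.length).filter (fun i => v ∈ L.get i) with hidxs
  set L' : List (Finset V) := idxs.map (fun i => (L.get i).erase v) with hL'
  have hlen : L'.length = idxs.length := List.length_map _
  have hmemidx : ∀ i : Fin L.length, i ∈ idxs ↔ v ∈ L.get i := by
    intro i
    simp [hidxs, List.mem_filter, List.mem_finRange]
  have hsorted : idxs.Pairwise (· < ·) :=
    (List.pairwise_lt_finRange L.length).sublist List.filter_sublist
  have hmono : StrictMono idxs.get := hsorted.sortedLT.strictMono_get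
  have hget : ∀ k : Fin L'.length, L'.get k = (L.get (idxs.get (Fin.cast hlen k))).erase v := by
    intro k
    simp [hL', List.get_eq_getElem, List.getElem_map]
  have hvget : ∀ k : Fin idxs.length, v ∈ L.get (idxs.get k) := by
    intro k
    exact (hmemidx _).1 (by rw [show idxs.get k = idxs.get ⟨k.1, k.2⟩ from rfl]; exact idxs.get_mem _)
  refine ⟨L', ?_, ?_, ?_⟩
  · -- Nodup
    rw [hL']
    refine List.Nodup.map_on ?_ (by rw [hidxs]; exact (List.nodup_finRange _).filter _)
    intro i₁ h₁ i₂ h₂ he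
    have hv₁ : v ∈ L.get i₁ := (hmemidx _).1 h₁
    have hv₂ : v ∈ L.get i₂ := (hmemidx _).1 h₂
    have : L.get i₁ = L.get i₂ := by
      rw [← Finset.insert_erase hv₁, ← Finset.insert_erase hv₂, he]
    exact hnd.get_inj_iff.1 this
  · -- facets
    intro F
    constructor
    · intro hF
      obtain ⟨i, hi, rfl⟩ := List.mem_map.1 hF
      have hv : v ∈ L.get i := (hmemidx _).1 hi
      rw [facet_link_iff]
      refine ⟨notMem_erase _ _, ?_⟩
      rw [Finset.insert_erase hv]
      exact (hfac _).1 (by rw [show L.get i = L.get ⟨i.1, i.2⟩ from rfl]; exact L.get_mem _)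
    · intro hF
      rw [facet_link_iff] at hF
      obtain ⟨hvF, hfacet⟩ := hF
      have : insert v F ∈ L := (hfac _).2 hfacet
      obtain ⟨i, hi⟩ := List.mem_iff_get.1 this
      have hvi : v ∈ L.get i := by rw [hi]; exact mem_insert_self v F
      refine List.mem_map.2 ⟨i, (hmemidx i).2 hvi, ?_⟩
      rw [hi, Finset.erase_insert hvF]
  · -- shelling steps
    intro k hk
    have hk0 : (0 : ℕ) < L'.length := lt_of_le_of_lt (Nat.zero_le _) k.isLt
    constructor
    · -- nonemptiness: take σ = ∅ and j = 0
      exact ⟨∅, Finset.empty_subset _, ⟨0, hk0⟩, hk, Finset.empty_subset _⟩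
    · intro σ ⟨hσk, j', hj'k, hσj'⟩ hmaxσ
      set i : Fin L.length := idxs.get (Fin.cast hlen k) with hi
      set i' : Fin L.length := idxs.get (Fin.cast hlen j') with hi'
      have hii' : i' < i := hmono (show (Fin.cast hlen j').1 < (Fin.cast hlen k).1 from hj'k)
      have hii'' : (i' : ℕ) < (i : ℕ) := hii'
      have hvi : v ∈ L.get i := hvget _
      have hvi' : v ∈ L.get i' := hvget _
      have hσk' : σ ⊆ (L.get i).erase v := by rw [← hget]; exact hσk
      have hσj'' : σ ⊆ (L.get i').erase v := by rw [← hget]; exact hσj'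
      have hins_k : insert v σ ⊆ L.get i :=
        Finset.insert_subset hvi (hσk'.trans (Finset.erase_subset _ _))
      have hins_j : insert v σ ⊆ L.get i' :=
        Finset.insert_subset hvi' (hσj''.trans (Finset.erase_subset _ _))
      -- the boundary collection at step i (in L), as a Finset
      set P : Finset V → Prop :=
        fun ρ => ρ ⊆ L.get i ∧ ∃ j : Fin L.length, (j : ℕ) < (i : ℕ) ∧ ρ ⊆ L.get j with hP
      set T : Finset (Finset V) :=
        (L.get i).powerset.filter (fun ρ => P ρ ∧ insert v σ ⊆ ρ) with hT
      have hTmem : ∀ ρ, ρ ∈ T ↔ P ρ ∧ insert v σ ⊆ ρ := by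
        intro ρ
        simp only [hT, Finset.mem_filter, Finset.mem_powerset]
        exact ⟨fun h => h.2, fun h => ⟨h.1.1, h⟩⟩
      have hTne : T.Nonempty :=
        ⟨insert v σ, (hTmem _).2 ⟨⟨hins_k, i', hii'', hins_j⟩, subset_rfl⟩⟩
      obtain ⟨ρ, hρT, hρmax⟩ := Finset.exists_max_image T Finset.card hTne
      obtain ⟨⟨hρk, jw, hjw, hρjw⟩, hσρ⟩ := (hTmem ρ).1 hρT
      -- ρ is maximal in the boundary collection at i
      have hρmaximal : ∀ τ : Finset V, P τ → ρ ⊆ τ → ρ = τ := by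
        intro τ hτ hρτ
        have hτT : τ ∈ T := (hTmem τ).2 ⟨hτ, hσρ.trans hρτ⟩
        exact Finset.eq_of_subset_of_card_le hρτ (hρmax τ hτT)
      have h1i : 1 ≤ (i : ℕ) := lt_of_le_of_lt (Nat.zero_le _) hii''
      have hcard : ρ.card + 1 = (L.get i).card :=
        (hstep i h1i).2 ρ ⟨hρk, jw, hjw, hρjw⟩ (fun τ hτ hρτ => hρmaximal τ hτ hρτ)
      have hvρ : v ∈ ρ := hσρ (mem_insert_self v σ)
      -- ρ.erase v is in the link boundary collection at k
      have hvjw : v ∈ L.get jw := hρjw hvρ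
      obtain ⟨k'', hk''⟩ := List.mem_iff_get.1 ((hmemidx jw).2 hvjw)
      have hk''k : (k'' : ℕ) < (k : ℕ) := by
        by_contra hcon
        push_neg at hcon
        have : (i : ℕ) ≤ (idxs.get k'' : ℕ) := by
          rcases eq_or_lt_of_le hcon with h | h
          · have : k'' = Fin.cast hlen k := by
              apply Fin.ext; simp [← h]
            rw [this]
          · exact le_of_lt (hmono (show Fin.cast hlen k < k'' by simpa [Fin.lt_def] using h))
        have h2 : (jw : ℕ) < (idxs.get k'' : ℕ) := lt_of_lt_of_le hjw this
        rw [hk''] at h2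
        exact absurd h2 (lt_irrefl _)
      have hρek : ρ.erase v ⊆ L'.get k := by
        rw [hget]
        exact Finset.erase_subset_erase v hρk
      have hρej : ρ.erase v ⊆ L'.get ⟨(k'' : ℕ), by rw [hlen]; exact k''.isLt⟩ := by
        rw [hget]
        have : idxs.get (Fin.cast hlen ⟨(k'' : ℕ), by rw [hlen]; exact k''.isLt⟩) = jw := by
          exact hk''
        rw [this]
        exact Finset.erase_subset_erase v hρjw
      have hσρe : σ ⊆ ρ.erase v := by
        intro x hx
        refine Finset.mem_erase.2 ⟨?_, hσρ (mem_insert_of_mem hx)⟩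
        rintro rfl
        exact (Finset.mem_erase.1 (hσk' hx)).1 rfl
      have hσeq : σ = ρ.erase v :=
        hmaxσ (ρ.erase v) ⟨hρek, ⟨(k'' : ℕ), by rw [hlen]; exact k''.isLt⟩, hk''k, hρej⟩ hσρe
      -- count cards
      have h1 : σ.card + 1 = ρ.card := by
        rw [hσeq]; exact Finset.card_erase_add_one hvρ
      have h2 : (L'.get k).card + 1 = (L.get i).card := by
        rw [hget]; exact Finset.card_erase_add_one hvi
      omega

/-- If the Alexander dual of `K` (taken over `[m]`) is shellable, then the Alexander dual
of the deletion `dl_K(v) = {σ ∈ K : v ∉ σ}`, taken over `[m] ∖ {v}`, is shellable. -/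
theorem dual_deletion_shellable_of_dual_shellable {m : ℕ} (K : Set (Finset (Fin m)))
    (hK : IsComplex K) (v : Fin m)
    (hshell : Shellable (dualOver Finset.univ K)) :
    Shellable (dualOver (Finset.univ.erase v) {σ ∈ K | v ∉ σ}) := by
  have key : dualOver (Finset.univ.erase v) {σ ∈ K | v ∉ σ}
      = {σ | v ∉ σ ∧ insert v σ ∈ dualOver Finset.univ K} := by
    ext σ
    have hset : (Finset.univ.erase v) \ σ = Finset.univ \ insert v σ := by
      ext x
      simp only [Finset.mem_sdiff, Finset.mem_erase, Finset.mem_univ, Finset.mem_insert,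
        true_and]
      tauto
    simp only [dualOver, Set.mem_setOf_eq, Set.mem_sep_iff]
    constructor
    · rintro ⟨hsub, hnot⟩
      have hvσ : v ∉ σ := fun h => (Finset.mem_erase.1 (hsub h)).1 rfl
      refine ⟨hvσ, Finset.subset_univ _, ?_⟩
      intro hmem
      apply hnot
      rw [hset]
      refine ⟨hmem, ?_⟩
      simp
    · rintro ⟨hvσ, -, hnot⟩
      refine ⟨?_, ?_⟩
      · intro x hx
        exact Finset.mem_erase.2 ⟨fun h => hvσ (h ▸ hx), Finset.mem_univ x⟩
      · intro hmem
        apply hnot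
        rw [← hset]
        exact hmem.1
  rw [key]
  exact link_shellable _ v hshell
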